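/- Assuming the Continuum Hypothesis, there exists a strongly ℵ₀-separated mad family. -/

import Mathlib

open Set

namespace PsiSpace

/-- An (infinite) almost disjoint family of infinite subsets of ℕ. -/
def AlmostDisjoint (𝒜 : Set (Set ℕ)) : Prop :=
  𝒜.Infinite ∧ (∀ a ∈ 𝒜, a.Infinite) ∧
    ∀ a ∈ 𝒜, ∀ b ∈ 𝒜, a ≠ b → (a ∩ b).Finite

/-- A maximal almost disjoint family. -/
def MadFamily (𝒜 : Set (Set ℕ)) : Prop :=
  AlmostDisjoint 𝒜 ∧ ∀ X : Set ℕ, X.Infinite → ∃ a ∈ 𝒜, (a ∩ X).Infinite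

/-- 𝒜↾B = {a ∈ 𝒜 : a ∩ B infinite}. -/
def ADRestrict (𝒜 : Set (Set ℕ)) (B : Set ℕ) : Set (Set ℕ) :=
  {a | a ∈ 𝒜 ∧ (a ∩ B).Infinite}

/-- 𝒜 has true cardinality 𝔠. -/
def TrueCardContinuum (𝒜 : Set (Set ℕ)) : Prop :=
  ∀ B : Set ℕ, (ADRestrict 𝒜 B).Finite ∨ Cardinal.mk ↥(ADRestrict 𝒜 B) = Cardinal.continuum

/-- The underlying set of the Mrówka–Isbell space Ψ(𝒜): ℕ together with the members of 𝒜. -/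
def Psi (𝒜 : Set (Set ℕ)) : Type := ℕ ⊕ {a : Set ℕ // a ∈ 𝒜}

/-- The isolated point of Ψ(𝒜) corresponding to n ∈ ℕ. -/
def Psi.nat {𝒜 : Set (Set ℕ)} (n : ℕ) : Psi 𝒜 := Sum.inl n

/-- The point of Ψ(𝒜) corresponding to a ∈ 𝒜. -/
def Psi.pt {𝒜 : Set (Set ℕ)} (a : {a : Set ℕ // a ∈ 𝒜}) : Psi 𝒜 := Sum.inr a

/-- The Mrówka–Isbell topology: each n ∈ ℕ is isolated, and basic neighbourhoods of a ∈ 𝒜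
are {a} ∪ (a \ F) for F finite. Equivalently, U is open iff for every a ∈ 𝒜 with a ∈ U,
all but finitely many elements of a belong to U. -/
instance psiTop (𝒜 : Set (Set ℕ)) : TopologicalSpace (Psi 𝒜) where
  IsOpen U := ∀ a : {a : Set ℕ // a ∈ 𝒜}, Psi.pt a ∈ U →
    {n : ℕ | n ∈ a.1 ∧ Psi.nat n ∉ U}.Finite
  isOpen_univ := fun a _ => by
    convert Set.finite_empty using 1
    ext n
    simp [Set.mem_univ]
  isOpen_inter := fun U V hU hV a ha => by
    refine ((hU a ha.1).union (hV a ha.2)).subset ?_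
    rintro n ⟨hn, hnUV⟩
    by_cases h : Psi.nat n ∈ U
    · exact Or.inr ⟨hn, fun h' => hnUV ⟨h, h'⟩⟩
    · exact Or.inl ⟨hn, h⟩
  isOpen_sUnion := fun S hS a ha => by
    obtain ⟨U, hUS, haU⟩ := ha
    exact (hS U hUS a haU).subset fun n hn => ⟨hn.1, fun h => hn.2 ⟨U, hUS, h⟩⟩

/-- The copy of a set W ⊆ ℕ inside Ψ(𝒜). -/
def PsiNat (𝒜 : Set (Set ℕ)) (W : Set ℕ) : Set (Psi 𝒜) := {x | ∃ n ∈ W, x = Psi.nat n}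

/-- The copy of a subfamily 𝒞 ⊆ 𝒜 inside Ψ(𝒜). -/
def PsiSub (𝒜 𝒞 : Set (Set ℕ)) : Set (Psi 𝒜) :=
  {x | ∃ a : {a : Set ℕ // a ∈ 𝒜}, a.1 ∈ 𝒞 ∧ x = Psi.pt a}

/-- A and B are separated by disjoint open sets. -/
def SepOpen {X : Type*} [TopologicalSpace X] (A B : Set X) : Prop :=
  ∃ U V : Set X, IsOpen U ∧ IsOpen V ∧ A ⊆ U ∧ B ⊆ V ∧ Disjoint U V

/-- Regular closed (closed domain): A is the closure of its interior. -/
def RegClosed {X : Type*} [TopologicalSpace X] (A : Set X) : Prop :=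
  closure (interior A) = A

/-- π-closed: a finite intersection of regular closed sets. -/
def PiClosed {X : Type*} [TopologicalSpace X] (A : Set X) : Prop :=
  ∃ S : Finset (Set X), (∀ B ∈ S, RegClosed B) ∧ A = ⋂₀ ↑S

/-- A is an intersection of at most n regular closed sets. -/
def InterOfAtMost {X : Type*} [TopologicalSpace X] (n : ℕ) (A : Set X) : Prop :=
  ∃ S : Finset (Set X), S.card ≤ n ∧ (∀ B ∈ S, RegClosed B) ∧ A = ⋂₀ ↑S

/-- Almost-normal: disjoint closed + regular closed sets are separated. -/
def AlmostNormal (X : Type*) [TopologicalSpace X] : Prop :=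
  ∀ A B : Set X, IsClosed A → RegClosed B → Disjoint A B → SepOpen A B

/-- π-normal: disjoint closed + π-closed sets are separated. -/
def PiNormal (X : Type*) [TopologicalSpace X] : Prop :=
  ∀ A B : Set X, IsClosed A → PiClosed B → Disjoint A B → SepOpen A B

/-- Quasi-normal: disjoint π-closed sets are separated. -/
def QuasiNormal (X : Type*) [TopologicalSpace X] : Prop :=
  ∀ A B : Set X, PiClosed A → PiClosed B → Disjoint A B → SepOpen A B

/-- Mildly-normal: disjoint regular closed sets are separated. -/
def MildlyNormal (X : Type*) [TopologicalSpace X] : Prop :=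
  ∀ A B : Set X, RegClosed A → RegClosed B → Disjoint A B → SepOpen A B

/-- Partly-normal: disjoint regular closed + π-closed sets are separated. -/
def PartlyNormal (X : Type*) [TopologicalSpace X] : Prop :=
  ∀ A B : Set X, RegClosed A → PiClosed B → Disjoint A B → SepOpen A B

/-- n-partly-normal: disjoint regular closed + (intersection of at most n regular closed)
sets are separated. -/
def NPartlyNormal (n : ℕ) (X : Type*) [TopologicalSpace X] : Prop :=
  ∀ A B : Set X, RegClosed A → InterOfAtMost n B → Disjoint A B → SepOpen A B

/-- 𝓘⁺(𝒜): the sets B ⊆ ℕ with 𝒜↾B infinite. -/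
def IPlus (𝒜 : Set (Set ℕ)) : Set (Set ℕ) := {B | (ADRestrict 𝒜 B).Infinite}

/-- Completely separable almost disjoint family. -/
def CompletelySeparable (𝒜 : Set (Set ℕ)) : Prop :=
  ∀ B ∈ IPlus 𝒜, ∃ a ∈ 𝒜, a ⊆ B

/-- A Luzin family: it can be enumerated as ⟨a_α : α < ω₁⟩ so that for each α < ω₁ and
n ∈ ℕ, the set {β < α : a_α ∩ a_β ⊆ n} is finite. -/
def LuzinFamily (𝒜 : Set (Set ℕ)) : Prop :=
  ∃ a : Ordinal.{0} → Set ℕ,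
    (∀ α, α < (Cardinal.aleph 1).ord → a α ∈ 𝒜) ∧
    (∀ x ∈ 𝒜, ∃ α, α < (Cardinal.aleph 1).ord ∧ a α = x) ∧
    (∀ α, α < (Cardinal.aleph 1).ord → ∀ β, β < (Cardinal.aleph 1).ord → α ≠ β → a α ≠ a β) ∧
    ∀ α, α < (Cardinal.aleph 1).ord → ∀ n : ℕ,
      {β : Ordinal.{0} | β < α ∧ a α ∩ a β ⊆ Set.Iio n}.Finite

/-- Strongly ℵ₀-separated almost disjoint family. -/
def StronglyAleph0Separated (𝒜 : Set (Set ℕ)) : Prop :=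
  ∀ A B : Set (Set ℕ), A ⊆ 𝒜 → B ⊆ 𝒜 → A.Countable → A.Infinite →
    B.Countable → B.Infinite → Disjoint A B →
    ∃ X : Set ℕ,
      (∀ a ∈ 𝒜, (a \ X).Finite ∨ (a ∩ X).Finite) ∧
      (∀ a ∈ A, (a \ X).Finite) ∧
      (∀ a ∈ B, (a ∩ X).Finite)

section Construction19


/-- Partition piece. -/
def Pp (n : ℕ) : Set ℕ := Set.range (Nat.pair n)

lemma Pp_infinite (n : ℕ) : (Pp n).Infinite :=
  Set.infinite_range_of_injective fun a b h => (Nat.pair_eq_pair.1 h).2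

lemma Pp_disj {m n : ℕ} (h : m ≠ n) : Pp m ∩ Pp n = ∅ := by
  ext x
  simp only [Pp, mem_inter_iff, mem_range, mem_empty_iff_false, iff_false, not_and]
  rintro ⟨a, rfl⟩ ⟨b, hb⟩
  exact h ((Nat.pair_eq_pair.1 hb).1).symm

lemma Pp_inj : Function.Injective Pp := by
  intro m n h
  by_contra hmn
  have : Nat.pair m 0 ∈ Pp m ∩ Pp n := ⟨⟨0, rfl⟩, h ▸ ⟨0, rfl⟩⟩
  rw [Pp_disj hmn] at this
  exact this

/-- L1: a countably infinite AD family is not maximal. -/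
lemma exists_ad_diag (c : ℕ → Set ℕ) (h1 : ∀ n, (c n).Infinite)
    (hAD : ∀ m n, m ≠ n → (c m ∩ c n).Finite) :
    ∃ Z : Set ℕ, Z.Infinite ∧ ∀ n, (Z ∩ c n).Finite := by
  set S : ℕ → Set ℕ := fun n => c n \ ⋃ k ∈ Finset.range n, c k with hSdef
  have hS : ∀ n, (S n).Infinite := by
    intro n
    have he : S n = c n \ ⋃ k ∈ Finset.range n, (c n ∩ c k) := by
      ext x
      simp only [hSdef, mem_diff, mem_iUnion, mem_inter_iff, exists_prop, not_exists, not_and]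
      tauto
    rw [he]
    exact (h1 n).diff ((Finset.range n).finite_toSet.biUnion fun k hk =>
      hAD n k (Finset.mem_range.1 (Finset.mem_coe.1 hk)).ne')
  have hex : ∀ n (b : ℕ), ∃ m, m ∈ S n ∧ b < m := by
    intro n b
    obtain ⟨m, hm, hbm⟩ := (hS n).exists_gt b
    exact ⟨m, hm, hbm⟩
  let z : ℕ → ℕ := fun n =>
    Nat.rec (Classical.choose (hex 0 0)) (fun n zn => Classical.choose (hex (n + 1) zn)) n
  have hzS : ∀ n, z n ∈ S n := by
    intro n
    cases n with
    | zero => exact (Classical.choose_spec (hex 0 0)).1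
    | succ n => exact (Classical.choose_spec (hex (n + 1) (z n))).1
  have hzmono : StrictMono z :=
    strictMono_nat_of_lt_succ fun n => (Classical.choose_spec (hex (n + 1) (z n))).2
  refine ⟨range z, infinite_range_of_injective hzmono.injective, fun m => ?_⟩
  refine ((finite_Iic m).image z).subset ?_
  rintro x ⟨⟨n, rfl⟩, hx⟩
  refine ⟨n, ?_, rfl⟩
  by_contra h
  have hmn : m < n := by simpa using h
  exact (hzS n).2 (Set.mem_biUnion (Finset.mem_range.2 hmn) hx)

/-- L2: exists X almost-containing exactly the members of the family in A. -/
lemma exists_separator (c : ℕ → Set ℕ)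
    (hAD : ∀ m n, c m = c n ∨ (c m ∩ c n).Finite) (A : Set (Set ℕ)) :
    ∃ X : Set ℕ, ∀ n, (c n ∈ A → (c n \ X).Finite) ∧ (c n ∉ A → (c n ∩ X).Finite) := by
  refine ⟨{x | ∃ n, c n ∈ A ∧ x ∈ c n ∧ ∀ k ≤ n, c k ∉ A → x ∉ c k},
    fun m => ⟨fun hmA => ?_, fun hmA => ?_⟩⟩
  · have hsub : c m \ {x | ∃ n, c n ∈ A ∧ x ∈ c n ∧ ∀ k ≤ n, c k ∉ A → x ∉ c k} ⊆
        ⋃ k ∈ Finset.range (m + 1), {x | c k ∉ A ∧ x ∈ c m ∩ c k} := by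
      rintro x ⟨hxm, hxX⟩
      simp only [mem_setOf_eq, not_exists] at hxX
      have hm := hxX m
      push_neg at hm
      obtain ⟨k, hk, hkA, hxk⟩ := hm hmA hxm
      exact Set.mem_biUnion (Finset.mem_range.2 (Nat.lt_succ_of_le hk)) ⟨hkA, hxm, hxk⟩
    refine (Set.Finite.biUnion (Finset.range (m + 1)).finite_toSet fun k _ => ?_).subset hsub
    by_cases hkA : c k ∈ A
    · convert Set.finite_empty using 1
      ext x; simp [hkA]
    · have hne : c m ≠ c k := fun h => hkA (h ▸ hmA)
      rcases hAD m k with h | h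
      · exact absurd h hne
      · exact h.subset fun x hx => hx.2
  · have hsub : c m ∩ {x | ∃ n, c n ∈ A ∧ x ∈ c n ∧ ∀ k ≤ n, c k ∉ A → x ∉ c k} ⊆
        ⋃ k ∈ Finset.range m, {x | c k ∈ A ∧ x ∈ c m ∩ c k} := by
      rintro x ⟨hxm, n, hnA, hxn, hmin⟩
      have hnm : n < m := by
        by_contra h
        exact hmin m (by omega) hmA hxm
      exact Set.mem_biUnion (Finset.mem_range.2 hnm) ⟨hnA, hxm, hxn⟩
    refine (Set.Finite.biUnion (Finset.range m).finite_toSet fun k _ => ?_).subset hsub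
    by_cases hkA : c k ∈ A
    · have hne : c m ≠ c k := fun h => hmA (h ▸ hkA)
      rcases hAD m k with h | h
      · exact absurd h hne
      · exact h.subset fun x hx => hx.2
    · convert Set.finite_empty using 1
      ext x; simp [hkA]

/-- L3: pseudo-intersection style diagonal deciding countably many sets. -/
lemma exists_decided_subset (Y : Set ℕ) (hY : Y.Infinite) (X : ℕ → Set ℕ) :
    ∃ a : Set ℕ, a ⊆ Y ∧ a.Infinite ∧ ∀ n, (a \ X n).Finite ∨ (a ∩ X n).Finite := by
  classical
  let T : ℕ → Set ℕ := fun n =>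
    Nat.rec Y (fun n Tn => if (Tn ∩ X n).Infinite then Tn ∩ X n else Tn \ X n) n
  have hTsucc : ∀ n, T (n + 1) = if (T n ∩ X n).Infinite then T n ∩ X n else T n \ X n :=
    fun n => rfl
  have hTinf : ∀ n, (T n).Infinite := by
    intro n
    induction n with
    | zero => exact hY
    | succ n ih =>
      rw [hTsucc]
      split_ifs with h
      · exact h
      · rw [Set.not_infinite] at h
        rw [← Set.diff_self_inter]
        exact ih.diff h
  have hTstep : ∀ n, T (n + 1) ⊆ T n := by
    intro n
    rw [hTsucc]
    split_ifs
    exacts [inter_subset_left, diff_subset]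
  have hTanti : Antitone T := antitone_nat_of_succ_le hTstep
  have hex : ∀ n (b : ℕ), ∃ m, m ∈ T n ∧ b < m := by
    intro n b
    obtain ⟨m, hm, hbm⟩ := (hTinf n).exists_gt b
    exact ⟨m, hm, hbm⟩
  let t : ℕ → ℕ := fun n =>
    Nat.rec (Classical.choose (hex 0 0)) (fun n tn => Classical.choose (hex (n + 1) tn)) n
  have htT : ∀ n, t n ∈ T n := by
    intro n
    cases n with
    | zero => exact (Classical.choose_spec (hex 0 0)).1
    | succ n => exact (Classical.choose_spec (hex (n + 1) (t n))).1
  have htmono : StrictMono t :=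
    strictMono_nat_of_lt_succ fun n => (Classical.choose_spec (hex (n + 1) (t n))).2
  have hfin : ∀ n, (range t \ T (n + 1)).Finite := by
    intro n
    refine ((finite_Iic n).image t).subset ?_
    rintro x ⟨⟨m, rfl⟩, hx⟩
    refine ⟨m, ?_, rfl⟩
    by_contra h
    have : n + 1 ≤ m := by simpa using h
    exact hx (hTanti this (htT m))
  refine ⟨range t, ?_, infinite_range_of_injective htmono.injective, fun n => ?_⟩
  · rintro x ⟨m, rfl⟩
    exact hTanti (Nat.zero_le m) (htT m)
  · by_cases h : (T n ∩ X n).Infinite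
    · left
      refine (hfin n).subset fun x hx => ⟨hx.1, fun hT => hx.2 ?_⟩
      rw [hTsucc, if_pos h] at hT
      exact hT.2
    · right
      refine (hfin n).subset fun x hx => ⟨hx.1, fun hT => ?_⟩
      rw [hTsucc, if_neg h] at hT
      exact hT.2 hx.2

/-- The requirements on the pair chosen at stage `α ≥ ω`. -/
def QQ (Sf : Ordinal.{0} → ℕ → Set ℕ) (α : Ordinal.{0})
    (prev : ∀ β, β < α → Set ℕ × Set ℕ) (p : Set ℕ × Set ℕ) : Prop :=
  p.1.Infinite ∧
  (∀ β (h : β < α), ((prev β h).1 ∩ p.1).Finite) ∧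
  (∀ β (h : β < α), (p.1 \ (prev β h).2).Finite ∨ (p.1 ∩ (prev β h).2).Finite) ∧
  (((Sf α 0).Infinite ∧ ∀ β (h : β < α), ((prev β h).1 ∩ Sf α 0).Finite) → p.1 ⊆ Sf α 0) ∧
  (∀ b : Set ℕ, (b = p.1 ∨ ∃ β, ∃ h : β < α, b = (prev β h).1) →
    (b ∈ Set.range (Sf α) → (b \ p.2).Finite) ∧ (b ∉ Set.range (Sf α) → (b ∩ p.2).Finite))

open scoped Classical in
/-- One step of the construction. -/
noncomputable def stepF (Sf : Ordinal.{0} → ℕ → Set ℕ) (α : Ordinal.{0})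
    (prev : ∀ β, β < α → Set ℕ × Set ℕ) : Set ℕ × Set ℕ :=
  if h : α < Ordinal.omega0 then (Pp (Classical.choose (Ordinal.lt_omega0.1 h)), ∅)
  else if h2 : ∃ p : Set ℕ × Set ℕ, QQ Sf α prev p then Classical.choose h2 else (∅, ∅)

/-- The transfinite construction. -/
noncomputable def ff (Sf : Ordinal.{0} → ℕ → Set ℕ) : Ordinal.{0} → Set ℕ × Set ℕ :=
  Ordinal.lt_wf.fix (fun α prev => stepF Sf α prev)

lemma ff_eq (Sf : Ordinal.{0} → ℕ → Set ℕ) (α : Ordinal.{0}) :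
    ff Sf α = stepF Sf α (fun β _ => ff Sf β) :=
  Ordinal.lt_wf.fix_eq _ α

/-- The key existence lemma at countable infinite stages. -/
lemma exists_Q (Sf : Ordinal.{0} → ℕ → Set ℕ) (α : Ordinal.{0})
    (hαω : Ordinal.omega0 ≤ α) (hα1 : α < (Cardinal.aleph 1).ord)
    (prev : ∀ β, β < α → Set ℕ × Set ℕ)
    (hinf : ∀ β h, (prev β h).1.Infinite)
    (hpAD : ∀ β h γ h', β ≠ γ → ((prev β h).1 ∩ (prev γ h').1).Finite) :
    ∃ p, QQ Sf α prev p := by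
  -- enumeration of Iio α
  have hcard : Ordinal.card α = Cardinal.aleph0 := by
    have h1 : Ordinal.card α < Cardinal.aleph 1 := Cardinal.lt_ord.1 hα1
    have h2 : Cardinal.aleph0 ≤ Ordinal.card α := by
      simpa using Ordinal.card_le_card hαω
    rw [← Cardinal.succ_aleph0, Order.lt_succ_iff] at h1
    exact le_antisymm h1 h2
  have hEe : Nonempty (ℕ ≃ ↥(Set.Iio α)) := by
    rw [← Cardinal.lift_mk_eq']
    rw [Ordinal.mk_Iio_ordinal, Cardinal.mk_nat, hcard]
    simp
  obtain ⟨E⟩ := hEe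
  set c : ℕ → Set ℕ := fun n => (prev (E n).1 (E n).2).1 with hc
  set Xl : ℕ → Set ℕ := fun n => (prev (E n).1 (E n).2).2 with hXl
  -- obtain the base infinite set Y
  obtain ⟨Y, hYinf, hYAD, hYsub⟩ : ∃ Y : Set ℕ, Y.Infinite ∧
      (∀ β (h : β < α), ((prev β h).1 ∩ Y).Finite) ∧
      (((Sf α 0).Infinite ∧ ∀ β (h : β < α), ((prev β h).1 ∩ Sf α 0).Finite) → Y ⊆ Sf α 0) := by
    by_cases hcond : (Sf α 0).Infinite ∧ ∀ β (h : β < α), ((prev β h).1 ∩ Sf α 0).Finite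
    · exact ⟨Sf α 0, hcond.1, hcond.2, fun _ => subset_rfl⟩
    · obtain ⟨Z, hZinf, hZad⟩ := exists_ad_diag c (fun n => hinf _ _)
        (fun m n hmn => hpAD _ _ _ _ (fun h => hmn (E.injective (Subtype.ext h))))
      refine ⟨Z, hZinf, fun β h => ?_, fun h => absurd h hcond⟩
      have hz := hZad (E.symm ⟨β, h⟩)
      rw [hc] at hz
      have hE : E (E.symm ⟨β, h⟩) = ⟨β, h⟩ := E.apply_symm_apply _
      simp only [hE] at hz
      rw [Set.inter_comm] at hz
      exact hz
  obtain ⟨a, haY, hainf, hadec⟩ := exists_decided_subset Y hYinf Xl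
  -- the separator X
  set c' : ℕ → Set ℕ := fun n => Nat.rec a (fun k _ => c k) n with hc'
  have hc'AD : ∀ m n, c' m = c' n ∨ (c' m ∩ c' n).Finite := by
    have hac : ∀ k, (a ∩ c k).Finite := by
      intro k
      have h1 : (c k ∩ Y).Finite := hYAD _ _
      have : a ∩ c k ⊆ c k ∩ Y := fun x hx => ⟨hx.2, haY hx.1⟩
      exact h1.subset this
    intro m n
    match m, n with
    | 0, 0 => exact Or.inl rfl
    | 0, (k+1) => exact Or.inr (hac k)
    | (k+1), 0 => exact Or.inr (by rw [Set.inter_comm]; exact hac k)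
    | (k+1), (l+1) =>
      by_cases hkl : (E k).1 = (E l).1
      · left
        have hkl' : k = l := E.injective (Subtype.ext hkl)
        rw [hkl']
      · exact Or.inr (hpAD _ _ _ _ hkl)
  obtain ⟨X, hX⟩ := exists_separator c' hc'AD (Set.range (Sf α))
  refine ⟨(a, X), hainf, ?_, ?_, fun h => haY.trans (by intro x hx; exact hYsub h hx) |>.trans subset_rfl, ?_⟩
  · intro β h
    have h1 : (prev β h).1 ∩ a ⊆ (prev β h).1 ∩ Y := fun x hx => ⟨hx.1, haY hx.2⟩
    exact (hYAD β h).subset h1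
  · intro β h
    have hdec := hadec (E.symm ⟨β, h⟩)
    have hE : E (E.symm ⟨β, h⟩) = ⟨β, h⟩ := E.apply_symm_apply _
    rw [hXl] at hdec
    simp only [hE] at hdec
    exact hdec
  · intro b hb
    obtain ⟨m, hm⟩ : ∃ m, b = c' m := by
      rcases hb with rfl | ⟨β, h, rfl⟩
      · exact ⟨0, rfl⟩
      · refine ⟨(E.symm ⟨β, h⟩) + 1, ?_⟩
        show (prev β h).1 = (prev (E (E.symm ⟨β, h⟩)).1 (E (E.symm ⟨β, h⟩)).2).1
        have hE : E (E.symm ⟨β, h⟩) = ⟨β, h⟩ := E.apply_symm_apply _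
        simp only [hE]
    subst hm
    exact hX m


/-- The full invariant. -/
def Phi (Sf : Ordinal.{0} → ℕ → Set ℕ) (α : Ordinal.{0}) : Prop :=
  (α < Ordinal.omega0 → (ff Sf α).2 = ∅ ∧ ∃ n : ℕ, α = n ∧ (ff Sf α).1 = Pp n) ∧
  (Ordinal.omega0 ≤ α → QQ Sf α (fun β _ => ff Sf β) (ff Sf α))

lemma phi_all (Sf : Ordinal.{0} → ℕ → Set ℕ) :
    ∀ α, α < (Cardinal.aleph 1).ord → Phi Sf α := by
  intro α
  induction α using Ordinal.induction with
  | h α IH =>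
    intro hα1
    have hIH : ∀ β, β < α → Phi Sf β := fun β hβ => IH β hβ (hβ.trans hα1)
    have hinf : ∀ β, β < α → (ff Sf β).1.Infinite := by
      intro β hβ
      rcases lt_or_ge β Ordinal.omega0 with h | h
      · obtain ⟨-, n, -, hP⟩ := (hIH β hβ).1 h
        rw [hP]; exact Pp_infinite n
      · exact ((hIH β hβ).2 h).1
    have hAD2 : ∀ β γ, β < γ → γ < α → ((ff Sf β).1 ∩ (ff Sf γ).1).Finite := by
      intro β γ hβγ hγα
      rcases lt_or_ge γ Ordinal.omega0 with h | h
      · obtain ⟨-, n, hn, hP⟩ := (hIH γ hγα).1 h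
        obtain ⟨-, m, hm, hPm⟩ := (hIH β (hβγ.trans hγα)).1 (hβγ.trans h)
        rw [hP, hPm, Pp_disj]
        · exact Set.finite_empty
        · intro hmn
          exact hβγ.ne (by rw [hm, hn, hmn])
      · exact ((hIH γ hγα).2 h).2.1 β hβγ
    rcases lt_or_ge α Ordinal.omega0 with h | h
    · constructor
      · intro _
        rw [ff_eq, stepF, dif_pos h]
        exact ⟨rfl, Classical.choose (Ordinal.lt_omega0.1 h),
          Classical.choose_spec (Ordinal.lt_omega0.1 h), rfl⟩
      · intro h'
        exact absurd h (not_lt.2 h')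
    · constructor
      · intro h'
        exact absurd h' (not_lt.2 h)
      · intro _
        have hpAD : ∀ β (hβ : β < α) γ (hγ : γ < α), β ≠ γ →
            ((ff Sf β).1 ∩ (ff Sf γ).1).Finite := by
          intro β hβ γ hγ hne
          rcases hne.lt_or_gt with hl | hl
          · exact hAD2 β γ hl hγ
          · rw [Set.inter_comm]
            exact hAD2 γ β hl hβ
        have hex : ∃ p : Set ℕ × Set ℕ, QQ Sf α (fun β _ => ff Sf β) p :=
          exists_Q Sf α h hα1 (fun β _ => ff Sf β) (fun β hβ => hinf β hβ)
            (fun β hβ γ hγ hne => hpAD β hβ γ hγ hne)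
        have : ff Sf α = stepF Sf α (fun β _ => ff Sf β) := ff_eq Sf α
        rw [stepF, dif_neg (not_lt.2 h), dif_pos hex] at this
        rw [this]
        exact Classical.choose_spec hex

-- derived facts (all stages below ω₁)
section derived
variable (Sf : Ordinal.{0} → ℕ → Set ℕ)

lemma ff_infinite {α : Ordinal.{0}} (hα : α < (Cardinal.aleph 1).ord) :
    (ff Sf α).1.Infinite := by
  rcases lt_or_ge α Ordinal.omega0 with h | h
  · obtain ⟨-, n, -, hP⟩ := (phi_all Sf α hα).1 h
    rw [hP]; exact Pp_infinite n
  · exact ((phi_all Sf α hα).2 h).1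

lemma ff_ad {β α : Ordinal.{0}} (hβα : β < α) (hα : α < (Cardinal.aleph 1).ord) :
    ((ff Sf β).1 ∩ (ff Sf α).1).Finite := by
  rcases lt_or_ge α Ordinal.omega0 with h | h
  · obtain ⟨-, n, hn, hP⟩ := (phi_all Sf α hα).1 h
    obtain ⟨-, m, hm, hPm⟩ := (phi_all Sf β (hβα.trans hα)).1 (hβα.trans h)
    rw [hP, hPm, Pp_disj]
    · exact Set.finite_empty
    · intro hmn
      exact hβα.ne (by rw [hm, hn, hmn])
  · exact ((phi_all Sf α hα).2 h).2.1 β hβα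

lemma ff_dec {β α : Ordinal.{0}} (hβα : β < α) (hα : α < (Cardinal.aleph 1).ord) :
    ((ff Sf α).1 \ (ff Sf β).2).Finite ∨ ((ff Sf α).1 ∩ (ff Sf β).2).Finite := by
  rcases lt_or_ge α Ordinal.omega0 with h | h
  · obtain ⟨hX, -⟩ := (phi_all Sf β (hβα.trans hα)).1 (hβα.trans h)
    right; rw [hX]; simp
  · exact ((phi_all Sf α hα).2 h).2.2.1 β hβα

lemma ff_mad {α : Ordinal.{0}} (hαω : Ordinal.omega0 ≤ α) (hα : α < (Cardinal.aleph 1).ord)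
    (h1 : (Sf α 0).Infinite) (h2 : ∀ β, β < α → ((ff Sf β).1 ∩ Sf α 0).Finite) :
    (ff Sf α).1 ⊆ Sf α 0 :=
  ((phi_all Sf α hα).2 hαω).2.2.2.1 ⟨h1, fun β hβ => h2 β hβ⟩

lemma ff_sep {α : Ordinal.{0}} (hαω : Ordinal.omega0 ≤ α) (hα : α < (Cardinal.aleph 1).ord)
    (b : Set ℕ) (hb : b = (ff Sf α).1 ∨ ∃ β, β < α ∧ b = (ff Sf β).1) :
    (b ∈ Set.range (Sf α) → (b \ (ff Sf α).2).Finite) ∧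
    (b ∉ Set.range (Sf α) → (b ∩ (ff Sf α).2).Finite) := by
  refine ((phi_all Sf α hα).2 hαω).2.2.2.2 b ?_
  rcases hb with h | ⟨β, hβ, h⟩
  · exact Or.inl h
  · exact Or.inr ⟨β, hβ, h⟩

lemma ff_fin {n : ℕ} : (ff Sf n).1 = Pp n := by
  have h : (n : Ordinal.{0}) < Ordinal.omega0 := Ordinal.nat_lt_omega0 n
  have hα : (n : Ordinal.{0}) < (Cardinal.aleph 1).ord := by
    refine h.trans ?_
    rw [← Cardinal.ord_aleph0]
    exact Cardinal.ord_lt_ord.2 Cardinal.aleph0_lt_aleph_one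
  obtain ⟨-, m, hm, hP⟩ := (phi_all Sf n hα).1 h
  have : n = m := by exact_mod_cast hm
  rw [hP, this]

end derived

/-- Existence of the book-keeping enumeration under CH. -/
lemma exists_Sf (hCH0 : Cardinal.continuum.{0} = Cardinal.aleph.{0} 1) :
    ∃ Sf : Ordinal.{0} → ℕ → Set ℕ,
      ∀ (g : ℕ → Set ℕ) (δ : Ordinal.{0}), δ < (Cardinal.aleph 1).ord →
        ∃ γ, δ ≤ γ ∧ γ < (Cardinal.aleph 1).ord ∧ Sf γ = g := by
  classical
  set ω1 : Ordinal.{0} := (Cardinal.aleph 1).ord with hω1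
  have hmk1 : Cardinal.mk ↥(Set.Iio ω1) = Cardinal.lift.{1, 0} (Cardinal.aleph.{0} 1) := by
    rw [Ordinal.mk_Iio_ordinal, Cardinal.card_ord]
  have hmkF : Cardinal.mk (ℕ → Set ℕ) = Cardinal.aleph 1 := by
    rw [Cardinal.mk_arrow, Cardinal.mk_set, Cardinal.mk_nat]
    simp only [Cardinal.lift_id]
    rw [Cardinal.two_power_aleph0, Cardinal.continuum_power_aleph0, hCH0]
  have hmkR : Cardinal.mk (↥(Set.Iio ω1) × (ℕ → Set ℕ)) = Cardinal.lift.{1, 0} (Cardinal.aleph.{0} 1) := by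
    rw [Cardinal.mk_prod, hmk1, hmkF, Cardinal.lift_id'.{0, 1}, ← Cardinal.lift_mul,
      Cardinal.mul_eq_self (Cardinal.aleph0_le_aleph 1)]
  obtain ⟨e⟩ : Nonempty (↥(Set.Iio ω1) ≃ (↥(Set.Iio ω1) × (ℕ → Set ℕ))) :=
    Cardinal.eq.1 (hmk1.trans hmkR.symm)
  refine ⟨fun γ => if h : γ < ω1 then (e ⟨γ, h⟩).2 else fun _ => ∅, ?_⟩
  intro g δ hδ
  by_contra hc
  push_neg at hc
  have hj : ∀ β : ↥(Set.Iio ω1), (e.symm (β, g)).1 < δ := by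
    intro β
    by_contra hle
    rw [not_lt] at hle
    refine hc (e.symm (β, g)).1 hle (e.symm (β, g)).2 ?_
    rw [dif_pos (show ((e.symm (β, g)).1 : Ordinal.{0}) < ω1 from (e.symm (β, g)).2)]
    have h1 : (⟨(e.symm (β, g)).1, (e.symm (β, g)).2⟩ : ↥(Set.Iio ω1)) = e.symm (β, g) :=
      Subtype.ext rfl
    rw [h1, e.apply_symm_apply]
  have hjinj : Function.Injective
      (fun β : ↥(Set.Iio ω1) => (⟨(e.symm (β, g)).1, hj β⟩ : ↥(Set.Iio δ))) := by
    intro b1 b2 hb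
    simp only [Subtype.mk.injEq] at hb
    have h1 : e.symm (b1, g) = e.symm (b2, g) := Subtype.ext (Subtype.mk.inj hb)
    have h2 : ((b1, g) : ↥(Set.Iio ω1) × (ℕ → Set ℕ)) = (b2, g) := e.symm.injective h1
    exact congrArg Prod.fst h2
  have hle := Cardinal.mk_le_of_injective hjinj
  rw [hmk1, Ordinal.mk_Iio_ordinal, Cardinal.lift_le] at hle
  exact absurd (Cardinal.lt_ord.1 hδ) (not_lt.2 hle)


end Construction19

/-- under CH there is a strongly ℵ₀-separated mad family. -/
theorem CH_stronglySeparated_mad (hCH : Cardinal.continuum = Cardinal.aleph 1) :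
    ∃ 𝒜, MadFamily 𝒜 ∧ StronglyAleph0Separated 𝒜 := by
  have hCH0 : Cardinal.continuum.{0} = Cardinal.aleph.{0} 1 := by
    apply Cardinal.lift_injective
    rw [Cardinal.lift_continuum, Cardinal.lift_aleph, Ordinal.lift_one]
    exact hCH
  classical
  obtain ⟨Sf, hSf⟩ := exists_Sf hCH0
  set ω1 : Ordinal.{0} := (Cardinal.aleph 1).ord with hω1
  have hω0ω1 : Ordinal.omega0 < ω1 := by
    rw [hω1, ← Cardinal.ord_aleph0]
    exact Cardinal.ord_lt_ord.2 Cardinal.aleph0_lt_aleph_one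
  set 𝒜 : Set (Set ℕ) := {s | ∃ α, α < ω1 ∧ (ff Sf α).1 = s} with h𝒜
  have hPpmem : ∀ n : ℕ, Pp n ∈ 𝒜 := fun n =>
    ⟨(n : Ordinal), (Ordinal.nat_lt_omega0 n).trans hω0ω1, ff_fin Sf⟩
  refine ⟨𝒜, ⟨⟨?_, ?_, ?_⟩, ?_⟩, ?_⟩
  · -- infinite
    exact Set.infinite_of_injective_forall_mem Pp_inj hPpmem
  · -- members infinite
    rintro a ⟨α, hα, rfl⟩
    exact ff_infinite Sf hα
  · -- almost disjoint
    rintro a ⟨α, hα, rfl⟩ b ⟨β, hβ, rfl⟩ hne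
    rcases lt_trichotomy α β with h | h | h
    · exact ff_ad Sf h hβ
    · exact absurd (by rw [h]) hne
    · rw [Set.inter_comm]
      exact ff_ad Sf h hα
  · -- maximality
    intro W hW
    obtain ⟨γ, hδγ, hγ1, hSfγ⟩ := hSf (fun _ => W) Ordinal.omega0 hω0ω1
    by_cases hex : ∃ β, β < γ ∧ ((ff Sf β).1 ∩ W).Infinite
    · obtain ⟨β, hβγ, hint⟩ := hex
      exact ⟨(ff Sf β).1, ⟨β, hβγ.trans hγ1, rfl⟩, hint⟩
    · push_neg at hex
      have hWeq : Sf γ 0 = W := by rw [hSfγ]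
      have hsub : (ff Sf γ).1 ⊆ Sf γ 0 := by
        refine ff_mad Sf hδγ hγ1 (by rw [hWeq]; exact hW) ?_
        intro β hβ
        rw [hWeq]
        exact hex β hβ
      rw [hWeq] at hsub
      refine ⟨(ff Sf γ).1, ⟨γ, hγ1, rfl⟩, ?_⟩
      rw [Set.inter_eq_self_of_subset_left hsub]
      exact ff_infinite Sf hγ1
  · -- strongly ℵ₀-separated
    intro A B hA𝒜 hB𝒜 hAc hAinf hBc hBinf hdisj
    obtain ⟨fa, hfa⟩ := hAc.exists_eq_range hAinf.nonempty
    have hidx : ∀ a : ↥(A ∪ B), ∃ α, α < ω1 ∧ (ff Sf α).1 = (a : Set ℕ) := by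
      rintro ⟨a, ha | ha⟩
      · exact hA𝒜 ha
      · exact hB𝒜 ha
    set ι : ↥(A ∪ B) → Ordinal.{0} := fun a => Classical.choose (hidx a) with hι
    have hιspec : ∀ a : ↥(A ∪ B), ι a < ω1 ∧ (ff Sf (ι a)).1 = (a : Set ℕ) :=
      fun a => Classical.choose_spec (hidx a)
    haveI : Countable ↥(A ∪ B) := (hAc.union hBc).to_subtype
    have hsup : (⨆ a : ↥(A ∪ B), ι a) < ω1 := by
      refine Ordinal.iSup_lt_ord ?_ fun a => (hιspec a).1
      rw [hω1, (Cardinal.isRegular_aleph_one).cof_eq]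
      exact Cardinal.mk_le_aleph0.trans_lt Cardinal.aleph0_lt_aleph_one
    set δ : Ordinal.{0} := max (Order.succ (⨆ a : ↥(A ∪ B), ι a)) Ordinal.omega0 with hδdef
    have hδ : δ < ω1 :=
      max_lt ((Cardinal.isSuccLimit_ord (Cardinal.aleph0_le_aleph 1)).succ_lt hsup) hω0ω1
    obtain ⟨γ, hδγ, hγ1, hSfγ⟩ := hSf fa δ hδ
    have hωγ : Ordinal.omega0 ≤ γ := le_trans (le_max_right _ _) hδγ
    have hιγ : ∀ a : ↥(A ∪ B), ι a < γ := by
      intro a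
      have h1 : ι a ≤ ⨆ a : ↥(A ∪ B), ι a := Ordinal.le_iSup ι a
      have h2 : ι a < Order.succ (⨆ a : ↥(A ∪ B), ι a) := Order.lt_succ_iff.2 h1
      exact lt_of_lt_of_le h2 (le_trans (le_max_left _ _) hδγ)
    have hrange : Set.range (Sf γ) = A := by rw [hSfγ, ← hfa]
    refine ⟨(ff Sf γ).2, ?_, ?_, ?_⟩
    · rintro a ⟨α, hα, rfl⟩
      rcases lt_trichotomy α γ with h | h | h
      · have hsep := ff_sep Sf hωγ hγ1 (ff Sf α).1 (Or.inr ⟨α, h, rfl⟩)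
        by_cases hr : (ff Sf α).1 ∈ Set.range (Sf γ)
        · exact Or.inl (hsep.1 hr)
        · exact Or.inr (hsep.2 hr)
      · subst h
        have hsep := ff_sep Sf hωγ hγ1 (ff Sf α).1 (Or.inl rfl)
        by_cases hr : (ff Sf α).1 ∈ Set.range (Sf α)
        · exact Or.inl (hsep.1 hr)
        · exact Or.inr (hsep.2 hr)
      · exact ff_dec Sf h hα
    · intro a haA
      have hmem : a ∈ A ∪ B := Or.inl haA
      have hspec := hιspec ⟨a, hmem⟩
      have hsep := ff_sep Sf hωγ hγ1 a (Or.inr ⟨ι ⟨a, hmem⟩, hιγ ⟨a, hmem⟩, hspec.2.symm⟩)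
      refine hsep.1 ?_
      rw [hrange]
      exact haA
    · intro a haB
      have hmem : a ∈ A ∪ B := Or.inr haB
      have hspec := hιspec ⟨a, hmem⟩
      have hsep := ff_sep Sf hωγ hγ1 a (Or.inr ⟨ι ⟨a, hmem⟩, hιγ ⟨a, hmem⟩, hspec.2.symm⟩)
      refine hsep.2 ?_
      rw [hrange]
      exact Set.disjoint_right.1 hdisj haB

end PsiSpace
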